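/- Let E_1, …, E_m be Banach lattices and let F be a Banach space. The set of strongly M-weakly compact m-linear operators, that is, continuous m-linear operators A : E_1 × ⋯ × E_m → F such that every resulting operator A_{a_{p_1},…,a_{p_k}} (obtained by fixing any 0 ≤ k ≤ m−1 coordinates p_1 < ⋯ < p_k at any vectors a_{p_j} ∈ E_{p_j}) sends norm bounded disjoint sequences in the product of the remaining Banach lattices (with the coordinatewise order) to norm null sequences in F, is a closed linear subspace of L(E_1,…,E_m;F). -/

import Mathlib

open Filter Topology Bornology

/-- Given vectors `a i` to be fixed at the coordinates in `S` and values `x` at the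
remaining coordinates, builds the full vector in `E₁ × ⋯ × E_m`. -/
def fixCoords' {m : ℕ} {E : Fin m → Type*} (S : Finset (Fin m)) (a : ∀ i, E i)
    (x : ∀ i : {i : Fin m // i ∉ S}, E i.1) : ∀ i, E i :=
  fun i => if h : i ∈ S then a i else x ⟨i, h⟩

/-- The set of strongly M-weakly compact `m`-linear operators from Banach lattices
`E₁, …, E_m` to a Banach space `F`: every resulting operator, obtained by fixing any
`0 ≤ k ≤ m-1` coordinates at arbitrary vectors, sends norm bounded disjoint sequences of the
product of the remaining Banach lattices (coordinatewise order) to norm null sequences. -/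
def StronglyMWeaklyCompact {m : ℕ} (E : Fin m → Type*) (F : Type*)
    [∀ i, NormedAddCommGroup (E i)] [∀ i, Lattice (E i)]
    [∀ i, IsOrderedAddMonoid (E i)] [∀ i, HasSolidNorm (E i)] [∀ i, NormedSpace ℝ (E i)]
    [NormedAddCommGroup F] [NormedSpace ℝ F] : Set (ContinuousMultilinearMap ℝ E F) :=
  {A | ∀ S : Finset (Fin m), S ≠ Finset.univ → ∀ a : ∀ i, E i,
    ∀ x : ℕ → ∀ i : {i : Fin m // i ∉ S}, E i.1, IsBounded (Set.range x) →
      (∀ j k, j ≠ k → |x j| ⊓ |x k| = 0) →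
      Tendsto (fun n => ‖A (fixCoords' S a (x n))‖) atTop (nhds 0)}

/-- For Banach lattices `E₁, …, E_m` and a Banach space `F`, the set of strongly M-weakly
compact `m`-linear operators is a closed linear subspace of `L(E₁,…,E_m;F)`. -/
theorem stmt17 {m : ℕ} (E : Fin m → Type*) (F : Type*)
    [∀ i, NormedAddCommGroup (E i)] [∀ i, Lattice (E i)]
    [∀ i, IsOrderedAddMonoid (E i)] [∀ i, HasSolidNorm (E i)] [∀ i, NormedSpace ℝ (E i)]
    [∀ i, CompleteSpace (E i)]
    [NormedAddCommGroup F] [NormedSpace ℝ F] [CompleteSpace F] :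
    IsClosed (StronglyMWeaklyCompact E F) ∧
      (0 : ContinuousMultilinearMap ℝ E F) ∈ StronglyMWeaklyCompact E F ∧
      (∀ A₁ ∈ StronglyMWeaklyCompact E F, ∀ A₂ ∈ StronglyMWeaklyCompact E F,
        A₁ + A₂ ∈ StronglyMWeaklyCompact E F) ∧
      (∀ (c : ℝ), ∀ A ∈ StronglyMWeaklyCompact E F,
        c • A ∈ StronglyMWeaklyCompact E F) := by
  constructor
  · apply isClosed_of_closure_subset
    intro A hA S hS a x hx hdisj
    obtain ⟨C, hC⟩ := isBounded_iff_forall_norm_le.mp hx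
    set C' : ℝ := max C 0 with hC'def
    have hC'0 : 0 ≤ C' := le_max_right _ _
    set v : ℕ → ∀ i, E i := fun n => fixCoords' S a (x n) with hv
    have hvb : ∀ n i, ‖v n i‖ ≤ ‖a i‖ + C' := by
      intro n i
      by_cases h : i ∈ S
      · simp only [hv, fixCoords', h, dif_pos]
        linarith
      · simp only [hv, fixCoords', h, dif_neg, not_false_iff]
        calc ‖x n ⟨i, h⟩‖ ≤ ‖x n‖ := norm_le_pi_norm _ _
          _ ≤ C := hC _ (Set.mem_range_self n)
          _ ≤ ‖a i‖ + C' := by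
              have := norm_nonneg (a i)
              have := le_max_left C 0
              linarith
    set P : ℝ := ∏ i, (‖a i‖ + C') with hP
    have hP0 : 0 ≤ P := Finset.prod_nonneg fun i _ => by positivity
    have hvP : ∀ n, (∏ i, ‖v n i‖) ≤ P :=
      fun n => Finset.prod_le_prod (fun i _ => norm_nonneg _) (fun i _ => hvb n i)
    rw [Metric.tendsto_atTop]
    intro ε hε
    obtain ⟨B, hBmem, hAB⟩ := Metric.mem_closure_iff.mp hA (ε / (2 * (P + 1)))
      (by positivity)
    rw [dist_eq_norm] at hAB
    have hB := hBmem S hS a x hx hdisj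
    rw [Metric.tendsto_atTop] at hB
    obtain ⟨N, hN⟩ := hB (ε / 2) (by positivity)
    refine ⟨N, fun n hn => ?_⟩
    have h1 : ‖(A - B) (v n)‖ ≤ ‖A - B‖ * P := by
      calc ‖(A - B) (v n)‖ ≤ ‖A - B‖ * ∏ i, ‖v n i‖ :=
            (A - B).le_opNorm (v n)
        _ ≤ ‖A - B‖ * P := by
            exact mul_le_mul_of_nonneg_left (hvP n) (norm_nonneg _)
    have h2 : ‖A - B‖ * P < ε / 2 := by
      have h3 : ‖A - B‖ * P ≤ (ε / (2 * (P + 1))) * P :=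
        mul_le_mul_of_nonneg_right hAB.le hP0
      have h4 : (ε / (2 * (P + 1))) * P < ε / 2 := by
        rw [div_mul_eq_mul_div, div_lt_div_iff₀ (by positivity) (by norm_num)]
        nlinarith
      linarith
    have h5 := hN n hn
    rw [Real.dist_eq, sub_zero, abs_of_nonneg (norm_nonneg _)] at h5 ⊢
    have h6 : ‖A (v n)‖ ≤ ‖(A - B) (v n)‖ + ‖B (v n)‖ := by
      have : A (v n) = (A - B) (v n) + B (v n) := by
        simp [ContinuousMultilinearMap.sub_apply]
      rw [this]; exact norm_add_le _ _
    calc ‖A (v n)‖ ≤ ‖(A - B) (v n)‖ + ‖B (v n)‖ := h6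
      _ ≤ ‖A - B‖ * P + ‖B (v n)‖ := by linarith
      _ < ε / 2 + ε / 2 := by linarith
      _ = ε := by ring
  refine ⟨?_, ?_, ?_⟩
  · intro S hS a x hx hdisj
    simp only [ContinuousMultilinearMap.zero_apply, norm_zero]
    exact tendsto_const_nhds
  · intro A₁ h₁ A₂ h₂ S hS a x hx hdisj
    have h1 := h₁ S hS a x hx hdisj
    have h2 := h₂ S hS a x hx hdisj
    apply squeeze_zero (fun n => norm_nonneg _)
      (g := fun n => ‖A₁ (fixCoords' S a (x n))‖ + ‖A₂ (fixCoords' S a (x n))‖)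
    · intro n
      simpa [ContinuousMultilinearMap.add_apply] using
        norm_add_le (A₁ (fixCoords' S a (x n))) (A₂ (fixCoords' S a (x n)))
    · simpa using h1.add h2
  · intro c A hA S hS a x hx hdisj
    have h := hA S hS a x hx hdisj
    simp only [ContinuousMultilinearMap.smul_apply, norm_smul]
    simpa using h.const_mul ‖c‖
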